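/- If L is a complete metric space, then the topological group Iso(L) of all surjective self-isometries of L, with the topology of pointwise convergence, is Raikov-complete (complete with respect to its two-sided uniformity). -/

import Mathlib

open Filter

/-- The topology of pointwise convergence on the isometry group of a metric space. -/
instance isoTopology (X : Type*) [MetricSpace X] : TopologicalSpace (X ≃ᵢ X) :=
  TopologicalSpace.induced (fun g (x : X) => g x) Pi.topologicalSpace

theorem iso_eval_continuous {X : Type*} [MetricSpace X] (x : X) :
    Continuous (fun g : X ≃ᵢ X => g x) :=
  (continuous_apply x).comp continuous_induced_dom

/-- If `L` is a complete metric space, then `Iso(L)` with the topology of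
pointwise convergence is Raikov-complete, i.e. complete with respect to its two-sided
uniformity (whose uniformity filter is the infimum of the left and right uniformity
filters). -/
theorem stmt_18 {L : Type*} [MetricSpace L] [CompleteSpace L]
    (U : UniformSpace (L ≃ᵢ L))
    (hU : @uniformity (L ≃ᵢ L) U =
      comap (fun p : (L ≃ᵢ L) × (L ≃ᵢ L) => p.1⁻¹ * p.2) (nhds 1) ⊓
      comap (fun p : (L ≃ᵢ L) × (L ≃ᵢ L) => p.2 * p.1⁻¹) (nhds 1)) :
    @CompleteSpace (L ≃ᵢ L) U := by
  constructor
  intro F hF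
  haveI hne : F.NeBot := hF.1
  -- left and right Cauchy conditions
  have hL : Tendsto (fun p : (L ≃ᵢ L) × (L ≃ᵢ L) => p.1⁻¹ * p.2) (F ×ˢ F) (nhds 1) := by
    rw [tendsto_iff_comap]
    exact hF.2.trans (by rw [hU]; exact inf_le_left)
  have hR : Tendsto (fun p : (L ≃ᵢ L) × (L ≃ᵢ L) => p.2 * p.1⁻¹) (F ×ˢ F) (nhds 1) := by
    rw [tendsto_iff_comap]
    exact hF.2.trans (by rw [hU]; exact inf_le_right)
  have hLx : ∀ x : L, Tendsto (fun p : (L ≃ᵢ L) × (L ≃ᵢ L) => (p.1⁻¹ * p.2) x)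
      (F ×ˢ F) (nhds x) := fun x => by
    simpa [Function.comp_def] using (iso_eval_continuous x).continuousAt.tendsto.comp hL
  have hRx : ∀ x : L, Tendsto (fun p : (L ≃ᵢ L) × (L ≃ᵢ L) => (p.2 * p.1⁻¹) x)
      (F ×ˢ F) (nhds x) := fun x => by
    simpa [Function.comp_def] using (iso_eval_continuous x).continuousAt.tendsto.comp hR
  -- pointwise Cauchy of evaluations
  have cauchyF : ∀ x : L, Cauchy (Filter.map (fun g : L ≃ᵢ L => g x) F) := by
    intro x
    refine ⟨hne.map _, ?_⟩
    rw [Filter.prod_map_map_eq]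
    refine tendsto_uniformity_iff_dist_tendsto_zero.mpr ?_
    have : ∀ p : (L ≃ᵢ L) × (L ≃ᵢ L),
        dist (p.1 x) (p.2 x) = dist ((p.1⁻¹ * p.2) x) x := by
      intro p
      rw [IsometryEquiv.mul_apply]
      calc dist (p.1 x) (p.2 x) = dist (p.1⁻¹ (p.1 x)) (p.1⁻¹ (p.2 x)) :=
            (p.1⁻¹.dist_eq _ _).symm
        _ = dist (p.1⁻¹ (p.2 x)) x := by rw [IsometryEquiv.inv_apply_self, dist_comm]
    simp only [Function.comp, Prod.map_apply, this]
    simpa using (hLx x).dist (tendsto_const_nhds (x := x))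
  have cauchyG : ∀ x : L, Cauchy (Filter.map (fun g : L ≃ᵢ L => g⁻¹ x) F) := by
    intro x
    refine ⟨hne.map _, ?_⟩
    rw [Filter.prod_map_map_eq]
    refine tendsto_uniformity_iff_dist_tendsto_zero.mpr ?_
    have : ∀ p : (L ≃ᵢ L) × (L ≃ᵢ L),
        dist (p.1⁻¹ x) (p.2⁻¹ x) = dist ((p.2 * p.1⁻¹) x) x := by
      intro p
      rw [IsometryEquiv.mul_apply]
      calc dist (p.1⁻¹ x) (p.2⁻¹ x) = dist (p.2 (p.1⁻¹ x)) (p.2 (p.2⁻¹ x)) :=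
            (p.2.dist_eq _ _).symm
        _ = dist (p.2 (p.1⁻¹ x)) x := by rw [IsometryEquiv.apply_inv_self]
    simp only [Function.comp, Prod.map_apply, this]
    simpa using (hRx x).dist (tendsto_const_nhds (x := x))
  -- pointwise limits
  have hex : ∀ x : L, ∃ y, Tendsto (fun g : L ≃ᵢ L => g x) F (nhds y) :=
    fun x => CompleteSpace.complete (cauchyF x)
  have hex' : ∀ x : L, ∃ y, Tendsto (fun g : L ≃ᵢ L => g⁻¹ x) F (nhds y) :=
    fun x => CompleteSpace.complete (cauchyG x)
  choose f hf using hex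
  choose j hj using hex'
  -- f is an isometry
  have fdist : ∀ x y : L, dist (f x) (f y) = dist x y := by
    intro x y
    refine tendsto_nhds_unique ((hf x).dist (hf y)) ?_
    have : (fun g : L ≃ᵢ L => dist (g x) (g y)) = fun _ => dist x y := by
      funext g; exact g.dist_eq x y
    rw [this]; exact tendsto_const_nhds
  have jdist : ∀ x y : L, dist (j x) (j y) = dist x y := by
    intro x y
    refine tendsto_nhds_unique ((hj x).dist (hj y)) ?_
    have : (fun g : L ≃ᵢ L => dist (g⁻¹ x) (g⁻¹ y)) = fun _ => dist x y := by
      funext g; exact g⁻¹.dist_eq x y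
    rw [this]; exact tendsto_const_nhds
  -- inverse relations
  have left_inv : ∀ x : L, j (f x) = x := by
    intro x
    have h1 : Tendsto (fun g : L ≃ᵢ L => dist (g⁻¹ (f x)) x) F (nhds (dist (j (f x)) x)) :=
      (hj (f x)).dist tendsto_const_nhds
    have h2 : Tendsto (fun g : L ≃ᵢ L => dist (g⁻¹ (f x)) x) F (nhds 0) := by
      have : ∀ g : L ≃ᵢ L, dist (g⁻¹ (f x)) x = dist (f x) (g x) := by
        intro g
        calc dist (g⁻¹ (f x)) x = dist (g (g⁻¹ (f x))) (g x) := (g.dist_eq _ _).symm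
          _ = dist (f x) (g x) := by rw [IsometryEquiv.apply_inv_self]
      simp only [this]
      simpa using (tendsto_const_nhds (x := f x)).dist (hf x)
    have := tendsto_nhds_unique h1 h2
    exact dist_eq_zero.mp this
  have right_inv : ∀ x : L, f (j x) = x := by
    intro x
    have h1 : Tendsto (fun g : L ≃ᵢ L => dist (g (j x)) x) F (nhds (dist (f (j x)) x)) :=
      (hf (j x)).dist tendsto_const_nhds
    have h2 : Tendsto (fun g : L ≃ᵢ L => dist (g (j x)) x) F (nhds 0) := by
      have : ∀ g : L ≃ᵢ L, dist (g (j x)) x = dist (j x) (g⁻¹ x) := by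
        intro g
        calc dist (g (j x)) x = dist (g (j x)) (g (g⁻¹ x)) := by
              rw [IsometryEquiv.apply_inv_self]
          _ = dist (j x) (g⁻¹ x) := g.dist_eq _ _
      simp only [this]
      simpa using (tendsto_const_nhds (x := j x)).dist (hj x)
    have := tendsto_nhds_unique h1 h2
    exact dist_eq_zero.mp this
  -- the limit isometry
  let φ : L ≃ᵢ L :=
    { toEquiv := ⟨f, j, left_inv, right_inv⟩
      isometry_toFun := Isometry.of_dist_eq fdist }
  have hφ : ⇑φ = f := rfl
  have hφinv : ⇑φ⁻¹ = j := rfl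
  refine ⟨φ, ?_⟩
  rw [@nhds_eq_comap_uniformity _ U, hU, Filter.comap_inf, Filter.comap_comap,
    Filter.comap_comap]
  refine le_inf ?_ ?_
  · rw [← tendsto_iff_comap]
    have : ((fun p : (L ≃ᵢ L) × (L ≃ᵢ L) => p.1⁻¹ * p.2) ∘ Prod.mk φ)
        = fun h => φ⁻¹ * h := rfl
    rw [this, nhds_induced, tendsto_comap_iff, tendsto_pi_nhds]
    intro x
    have : (fun h : L ≃ᵢ L => ((fun g (x : L) => g x) ∘ fun h => φ⁻¹ * h) h x)
        = fun h : L ≃ᵢ L => j (h x) := by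
      funext h; simp [Function.comp, IsometryEquiv.mul_apply, hφinv]
    rw [this]
    show Tendsto (fun h : L ≃ᵢ L => j (h x)) F (nhds x)
    have hcont : Continuous j := (Isometry.of_dist_eq jdist).continuous
    have := hcont.continuousAt.tendsto.comp (hf x)
    simpa [left_inv x, Function.comp_def] using this
  · rw [← tendsto_iff_comap]
    have : ((fun p : (L ≃ᵢ L) × (L ≃ᵢ L) => p.2 * p.1⁻¹) ∘ Prod.mk φ)
        = fun h => h * φ⁻¹ := rfl
    rw [this, nhds_induced, tendsto_comap_iff, tendsto_pi_nhds]
    intro x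
    have heq : (fun h : L ≃ᵢ L => ((fun g (x : L) => g x) ∘ fun h => h * φ⁻¹) h x)
        = fun h : L ≃ᵢ L => h (j x) := by
      funext h; simp [Function.comp, IsometryEquiv.mul_apply, hφinv]
    rw [heq]
    show Tendsto (fun h : L ≃ᵢ L => h (j x)) F (nhds x)
    simpa [right_inv x] using hf (j x)
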